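/- Suppose f : ℝ^d → ℝ is L_f-smooth, h : ℝ^d → ℝ is L_h-smooth, g : ℝ^d → ℝ ∪ {+∞} is proper, lower semicontinuous and ρ-weakly convex. Let γ ∈ (0, min{1/ρ, 1/L_f}), λ > 0, α ∈ (0,1). Fix x ∈ ℝ^d, let y be the unique minimizer over y of g(y) + (1/(2γ))‖y − (x − γ∇(f+h)(x))‖², let t be the unique minimizer over u of f(u) + (1/(2γ))‖u − ((1 − λ)x + γ∇f(x) + λy)‖², and set x⁺ := (1 − α)x + αt. Then ⟨∇h(x) − ∇h(x⁺), y − x⁺⟩ ≥ −(L_h/(λα)) ( |1 − λα| + L_f γ ) ‖x − x⁺‖². -/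

import Mathlib

open scoped RealInnerProductSpace

/-- `g` is `ρ`-weakly convex: `g + (ρ/2)‖·‖²` is convex (extended-real-valued version). -/
def WeaklyConvexE {E : Type*} [NormedAddCommGroup E] [InnerProductSpace ℝ E]
    (ρ : ℝ) (g : E → EReal) : Prop :=
  ∀ x y : E, ∀ t : ℝ, 0 ≤ t → t ≤ 1 →
    g (t • x + (1 - t) • y) + (((ρ / 2) * ‖t • x + (1 - t) • y‖ ^ 2 : ℝ) : EReal) ≤
      (t : EReal) * (g x + (((ρ / 2) * ‖x‖ ^ 2 : ℝ) : EReal)) +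
        ((1 - t : ℝ) : EReal) * (g y + (((ρ / 2) * ‖y‖ ^ 2 : ℝ) : EReal))

theorem q2_estimate
    {E : Type*} [NormedAddCommGroup E] [InnerProductSpace ℝ E] [FiniteDimensional ℝ E]
    (f h : E → ℝ) (g : E → EReal) (Lf Lh ρ : ℝ)
    (hLf : 0 ≤ Lf) (hLh : 0 ≤ Lh) (hρ : 0 ≤ ρ)
    (hfd : Differentiable ℝ f)
    (hflip : ∀ x y : E, ‖gradient f x - gradient f y‖ ≤ Lf * ‖x - y‖)
    (hhd : Differentiable ℝ h)
    (hhlip : ∀ x y : E, ‖gradient h x - gradient h y‖ ≤ Lh * ‖x - y‖)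
    (hgtop : ∃ x, g x ≠ ⊤) (hgbot : ∀ x, g x ≠ ⊥)
    (hglsc : LowerSemicontinuous g)
    (hwc : WeaklyConvexE ρ g)
    (γ lam α : ℝ) (hγ0 : 0 < γ) (hγρ : γ * ρ < 1) (hγf : γ * Lf < 1)
    (hlam : 0 < lam) (hα0 : 0 < α) (hα1 : α < 1)
    (x y t : E)
    (hy : ∀ w : E,
      g y + ((1 / (2 * γ) *
        ‖y - (x - γ • gradient (fun v => f v + h v) x)‖ ^ 2 : ℝ) : EReal) ≤
      g w + ((1 / (2 * γ) *
        ‖w - (x - γ • gradient (fun v => f v + h v) x)‖ ^ 2 : ℝ) : EReal))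
    (ht : ∀ u : E,
      f t + 1 / (2 * γ) *
        ‖t - ((1 - lam) • x + γ • gradient f x + lam • y)‖ ^ 2 ≤
      f u + 1 / (2 * γ) *
        ‖u - ((1 - lam) • x + γ • gradient f x + lam • y)‖ ^ 2)
    (xp : E) (hxp : xp = (1 - α) • x + α • t) :
    ⟪gradient h x - gradient h xp, y - xp⟫ ≥
      -(Lh / (lam * α)) * (|1 - lam * α| + Lf * γ) * ‖x - xp‖ ^ 2 := by
  set w : E := (1 - lam) • x + γ • gradient f x + lam • y with hw
  set c : ℝ := 1 / (2 * γ) with hc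
  set v : E := gradient f t + (2 * c) • (t - w) with hv
  -- first-order optimality for t
  have hsub : HasFDerivAt (fun u : E => u - w) (ContinuousLinearMap.id ℝ E) t :=
    (hasFDerivAt_id t).sub_const w
  have hinner := hsub.inner ℝ hsub
  have hf' : HasFDerivAt f (InnerProductSpace.toDual ℝ E (gradient f t)) t :=
    (hfd t).hasGradientAt.hasFDerivAt
  have hφ : HasFDerivAt (fun u : E => f u + c * ‖u - w‖ ^ 2)
      (InnerProductSpace.toDual ℝ E v) t := by
    have hsum := hf'.add (hinner.const_mul c)
    have hfun : (fun u : E => f u + c * ⟪u - w, u - w⟫) =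
        fun u : E => f u + c * ‖u - w‖ ^ 2 := by
      funext u; rw [real_inner_self_eq_norm_sq]
    rw [show (f + fun y => c * ⟪y - w, y - w⟫) = (fun u : E => f u + c * ⟪u - w, u - w⟫) from rfl, hfun] at hsum
    refine hsum.congr_fderiv ?_
    apply ContinuousLinearMap.ext
    intro z
    simp only [InnerProductSpace.toDual_apply_apply, ContinuousLinearMap.add_apply,
      ContinuousLinearMap.smul_apply, ContinuousLinearMap.coe_comp', Function.comp_apply,
      ContinuousLinearMap.prod_apply, ContinuousLinearMap.coe_id', id_eq,
      fderivInnerCLM_apply, smul_eq_mul, hv, inner_add_left, inner_smul_left,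
      conj_trivial]
    rw [real_inner_comm z (t - w)]
    ring
  have hmin : IsLocalMin (fun u : E => f u + c * ‖u - w‖ ^ 2) t :=
    Filter.Eventually.of_forall fun u => ht u
  have h0 : InnerProductSpace.toDual ℝ E v = 0 := hmin.hasFDerivAt_eq_zero hφ
  have hkey : v = 0 :=
    (InnerProductSpace.toDual ℝ E).injective (by rw [h0, map_zero])
  rw [hv] at hkey
  -- multiply by γ
  have hkey2 : γ • gradient f t + (t - w) = 0 := by
    have h2 := congrArg (fun z : E => γ • z) hkey
    have h3 : γ * (2 * c) = 1 := by rw [hc]; field_simp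
    simpa [smul_add, smul_smul, h3, one_smul] using h2
  rw [hw] at hkey2
  -- vector identities
  have h1 : lam • (y - x) = (t - x) + γ • (gradient f t - gradient f x) := by
    linear_combination (norm := module) (-1 : ℝ) • hkey2
  have hid : lam • (y - xp) =
      (1 - lam * α) • (t - x) + γ • (gradient f t - gradient f x) := by
    rw [hxp]
    linear_combination (norm := module) h1
  -- norms
  have hk : ‖x - xp‖ = α * ‖t - x‖ := by
    have : x - xp = (-α) • (t - x) := by rw [hxp]; module
    rw [this, norm_smul, Real.norm_eq_abs, abs_neg, abs_of_pos hα0]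
  have hbn : lam * ‖y - xp‖ ≤ (|1 - lam * α| + Lf * γ) * ‖t - x‖ := by
    have h3 : ‖lam • (y - xp)‖ ≤ |1 - lam * α| * ‖t - x‖ + γ * (Lf * ‖t - x‖) := by
      rw [hid]
      refine (norm_add_le _ _).trans ?_
      gcongr
      · rw [norm_smul, Real.norm_eq_abs]
      · rw [norm_smul, Real.norm_eq_abs, abs_of_pos hγ0]
        exact mul_le_mul_of_nonneg_left (hflip t x) (le_of_lt hγ0)
    rw [norm_smul, Real.norm_eq_abs, abs_of_pos hlam] at h3
    nlinarith [h3]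
  have han : ‖gradient h x - gradient h xp‖ ≤ Lh * ‖x - xp‖ := hhlip x xp
  -- combine
  have hip : ⟪gradient h x - gradient h xp, y - xp⟫ ≥
      -(‖gradient h x - gradient h xp‖ * ‖y - xp‖) := by
    have := real_inner_le_norm (-(gradient h x - gradient h xp)) (y - xp)
    rw [inner_neg_left, norm_neg] at this
    linarith
  have hb' : ‖y - xp‖ ≤ (|1 - lam * α| + Lf * γ) * ‖t - x‖ / lam := by
    rw [le_div_iff₀ hlam]
    linarith [hbn]
  have hmul : ‖gradient h x - gradient h xp‖ * ‖y - xp‖ ≤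
      (Lh * ‖x - xp‖) * ((|1 - lam * α| + Lf * γ) * ‖t - x‖ / lam) :=
    mul_le_mul han hb' (norm_nonneg _) (by positivity)
  have heq : (Lh * ‖x - xp‖) * ((|1 - lam * α| + Lf * γ) * ‖t - x‖ / lam) =
      (Lh / (lam * α)) * (|1 - lam * α| + Lf * γ) * ‖x - xp‖ ^ 2 := by
    rw [hk]
    field_simp
  rw [heq] at hmul
  linarith [hip, hmul]
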